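/- Let v1, v2 be distinct vertices of BG_+(n) with associated families D1, D2 satisfying ⋂D1 = {i} = ⋂D2. Then v1 and v2 are adjacent (lie on a common edge of BG_+(n)) if and only if D1 ⊆ D2 or D2 ⊆ D1, and the symmetric difference D1 Δ D2 has exactly one element. -/

import Mathlib

open Finset

def core {n : ℕ} (v : Finset (Fin n) → ℝ) : Set (Fin n → ℝ) :=
  {x | (∀ S : Finset (Fin n), v S ≤ ∑ i ∈ S, x i) ∧ ∑ i, x i = v Finset.univ}

def BGplus (n : ℕ) : Set (Finset (Fin n) → ℝ) :=
  {v | v ∅ = 0 ∧ (∀ S, 0 ≤ v S) ∧ v Finset.univ = 1 ∧ (core v).Nonempty}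

def gameOf {n : ℕ} (D : Finset (Finset (Fin n))) : Finset (Fin n) → ℝ :=
  fun S => if S ∈ D ∨ S = Finset.univ then 1 else 0

lemma gameOf_nonneg {n : ℕ} (D : Finset (Finset (Fin n))) (S : Finset (Fin n)) :
    0 ≤ gameOf D S := by
  unfold gameOf; split <;> norm_num

lemma gameOf_le_one {n : ℕ} (D : Finset (Finset (Fin n))) (S : Finset (Fin n)) :
    gameOf D S ≤ 1 := by
  unfold gameOf; split <;> norm_num

lemma gameOf_eq_one {n : ℕ} {D : Finset (Finset (Fin n))} {S : Finset (Fin n)}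
    (h : S ∈ D ∨ S = Finset.univ) : gameOf D S = 1 := if_pos h

lemma gameOf_eq_zero {n : ℕ} {D : Finset (Finset (Fin n))} {S : Finset (Fin n)}
    (h1 : S ∉ D) (h2 : S ≠ Finset.univ) : gameOf D S = 0 := if_neg (by tauto)

lemma gameOf_univ {n : ℕ} (D : Finset (Finset (Fin n))) : gameOf D Finset.univ = 1 :=
  gameOf_eq_one (Or.inr rfl)

lemma mem_BGplus_of {n : ℕ} (i : Fin n) (w : Finset (Fin n) → ℝ)
    (h0 : ∀ S, 0 ≤ w S) (h1 : ∀ S, w S ≤ 1) (hu : w Finset.univ = 1)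
    (hz : ∀ S, i ∉ S → w S = 0) : w ∈ BGplus n := by
  refine ⟨hz ∅ (by simp), h0, hu, ⟨fun j => if j = i then 1 else 0, ?_, ?_⟩⟩
  · intro S
    rw [Finset.sum_ite_eq' S i (fun _ => (1:ℝ))]
    by_cases hiS : i ∈ S
    · simpa [hiS] using h1 S
    · simp [hiS, hz S hiS]
  · rw [Finset.sum_ite_eq' Finset.univ i (fun _ => (1:ℝ))]
    simp [hu]

lemma gameOf_mem_BGplus {n : ℕ} (D : Finset (Finset (Fin n))) (i : Fin n)
    (hi : ∀ S ∈ D, i ∈ S) : gameOf D ∈ BGplus n :=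
  mem_BGplus_of i _ (gameOf_nonneg D) (gameOf_le_one D) (gameOf_univ D)
    (fun S hiS => gameOf_eq_zero (fun h => hiS (hi S h)) (fun h => hiS (h ▸ Finset.mem_univ i)))

lemma BGplus_le_one {n : ℕ} {w : Finset (Fin n) → ℝ} (hw : w ∈ BGplus n)
    (S : Finset (Fin n)) : w S ≤ 1 := by
  obtain ⟨h0, hpos, hu, x, hx, hsum⟩ := hw
  have hxn : ∀ j, 0 ≤ x j := fun j => le_trans (hpos {j}) (by simpa using hx {j})
  calc w S ≤ ∑ j ∈ S, x j := hx S
    _ ≤ ∑ j, x j := Finset.sum_le_sum_of_subset_of_nonneg (Finset.subset_univ S)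
        (fun j _ _ => hxn j)
    _ = 1 := by rw [hsum, hu]

lemma extreme_insert {n : ℕ} (D : Finset (Finset (Fin n))) (T : Finset (Fin n))
    (i : Fin n) (hT : T ∉ D) (hTU : T ≠ Finset.univ)
    (hiD : ∀ S ∈ D, i ∈ S) (hiT : i ∈ T) :
    IsExtreme ℝ (BGplus n) (segment ℝ (gameOf D) (gameOf (insert T D))) := by
  have hsame : ∀ S, S ≠ T → gameOf (insert T D) S = gameOf D S := by
    intro S hST
    unfold gameOf
    simp [Finset.mem_insert, hST]
  have hvT1 : gameOf D T = 0 := gameOf_eq_zero hT hTU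
  have hvT2 : gameOf (insert T D) T = 1 := gameOf_eq_one (Or.inl (Finset.mem_insert_self T D))
  constructor
  · rintro w ⟨a, b, ha, hb, hab, rfl⟩
    refine mem_BGplus_of i _ ?_ ?_ ?_ ?_
    · intro S
      have h1 := gameOf_nonneg D S
      have h2 := gameOf_nonneg (insert T D) S
      simp only [Pi.add_apply, Pi.smul_apply, smul_eq_mul]
      nlinarith
    · intro S
      have h1 := gameOf_le_one D S
      have h2 := gameOf_le_one (insert T D) S
      have h1' := gameOf_nonneg D S
      have h2' := gameOf_nonneg (insert T D) S
      simp only [Pi.add_apply, Pi.smul_apply, smul_eq_mul]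
      nlinarith
    · simp only [Pi.add_apply, Pi.smul_apply, smul_eq_mul, gameOf_univ]
      linarith
    · intro S hiS
      have hSD : S ∉ D := fun h => hiS (hiD S h)
      have hST : S ≠ T := fun h => hiS (h ▸ hiT)
      have hSU : S ≠ Finset.univ := fun h => hiS (h ▸ Finset.mem_univ i)
      have hSD' : S ∉ insert T D := by simp [Finset.mem_insert, hST, hSD]
      simp only [Pi.add_apply, Pi.smul_apply, smul_eq_mul,
        gameOf_eq_zero hSD hSU, gameOf_eq_zero hSD' hSU]
      ring
  · intro x1 hx1 x2 hx2 w hwB hwopen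
    obtain ⟨a, b, ha, hb, hab, hw⟩ := hwB
    obtain ⟨c, d, hc, hd, hcd, hw2⟩ := hwopen
    have hb1 := BGplus_le_one hx1
    have hb2 := BGplus_le_one hx2
    have hn1 := hx1.2.1
    have hn2 := hx2.2.1
    have key : ∀ S, S ≠ T → x1 S = gameOf D S ∧ x2 S = gameOf D S := by
      intro S hST
      have hwS : c * x1 S + d * x2 S = a * gameOf D S + b * gameOf (insert T D) S := by
        have h1 := congrFun hw2 S
        have h2 := congrFun hw S
        simp only [Pi.add_apply, Pi.smul_apply, smul_eq_mul] at h1 h2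
        rw [h1, ← h2]
      rw [hsame S hST] at hwS
      by_cases hS : S ∈ D ∨ S = Finset.univ
      · rw [gameOf_eq_one hS] at hwS ⊢
        have e1 : (1:ℝ) ≤ x1 S := by
          nlinarith [mul_nonneg hd.le (sub_nonneg.2 (hb2 S))]
        have e2 : (1:ℝ) ≤ x2 S := by
          nlinarith [mul_nonneg hc.le (sub_nonneg.2 (hb1 S))]
        exact ⟨le_antisymm (hb1 S) e1, le_antisymm (hb2 S) e2⟩
      · push_neg at hS
        rw [gameOf_eq_zero hS.1 hS.2] at hwS ⊢
        have e1 : x1 S ≤ 0 := by nlinarith [mul_nonneg hd.le (hn2 S)]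
        have e2 : x2 S ≤ 0 := by nlinarith [mul_nonneg hc.le (hn1 S)]
        exact ⟨le_antisymm e1 (hn1 S), le_antisymm e2 (hn2 S)⟩
    have mk : ∀ (x : Finset (Fin n) → ℝ), (∀ S, S ≠ T → x S = gameOf D S) →
        0 ≤ x T → x T ≤ 1 → x ∈ segment ℝ (gameOf D) (gameOf (insert T D)) := by
      intro x hxk h0 h1
      refine ⟨1 - x T, x T, by linarith, h0, by ring, ?_⟩
      funext S
      simp only [Pi.add_apply, Pi.smul_apply, smul_eq_mul]
      by_cases hST : S = T
      · subst hST; rw [hvT1, hvT2]; ring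
      · rw [hsame S hST, hxk S hST]; ring
    exact mk x1 (fun S h => (key S h).1) (hn1 T) (hb1 T)

lemma not_extreme_of {n : ℕ} (v1 v2 v3 v4 : Finset (Fin n) → ℝ)
    (h3 : v3 ∈ BGplus n) (h4 : v4 ∈ BGplus n)
    (hsum : ∀ S, v1 S + v2 S = v3 S + v4 S)
    (h3ns : v3 ∉ segment ℝ v1 v2) :
    ¬ IsExtreme ℝ (BGplus n) (segment ℝ v1 v2) := by
  intro hext
  have hm : (1/2 : ℝ) • v1 + (1/2 : ℝ) • v2 ∈ segment ℝ v1 v2 :=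
    ⟨1/2, 1/2, by norm_num, by norm_num, by norm_num, rfl⟩
  have hm2 : (1/2 : ℝ) • v1 + (1/2 : ℝ) • v2 ∈ openSegment ℝ v3 v4 := by
    refine ⟨1/2, 1/2, by norm_num, by norm_num, by norm_num, ?_⟩
    funext S
    simp only [Pi.add_apply, Pi.smul_apply, smul_eq_mul]
    linarith [hsum S]
  exact h3ns (hext.2 h3 h4 hm hm2)

lemma not_extreme_nonsub {n : ℕ} (D1 D2 : Finset (Finset (Fin n))) (i : Fin n)
    (h1U : Finset.univ ∉ D1) (h2U : Finset.univ ∉ D2)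
    (hi1 : ∀ S ∈ D1, i ∈ S) (hi2 : ∀ S ∈ D2, i ∈ S)
    (S1 : Finset (Fin n)) (hS1D1 : S1 ∈ D1) (hS1D2 : S1 ∉ D2)
    (S2 : Finset (Fin n)) (hS2D2 : S2 ∈ D2) (hS2D1 : S2 ∉ D1) :
    ¬ IsExtreme ℝ (BGplus n) (segment ℝ (gameOf D1) (gameOf D2)) := by
  apply not_extreme_of (gameOf D1) (gameOf D2) (gameOf (D1 ∪ D2)) (gameOf (D1 ∩ D2))
  · exact gameOf_mem_BGplus _ i (fun S hS => by
      rcases Finset.mem_union.mp hS with h | h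
      exacts [hi1 S h, hi2 S h])
  · exact gameOf_mem_BGplus _ i (fun S hS => hi1 S (Finset.mem_inter.mp hS).1)
  · intro S
    by_cases hu : S = Finset.univ
    · simp [gameOf, hu]
    · by_cases h1 : S ∈ D1 <;> by_cases h2 : S ∈ D2 <;>
        simp [gameOf, Finset.mem_union, Finset.mem_inter, h1, h2, hu]
  · rintro ⟨a, b, ha, hb, hab, heq⟩
    have hS1U : S1 ≠ Finset.univ := fun h => h1U (h ▸ hS1D1)
    have hS2U : S2 ≠ Finset.univ := fun h => h2U (h ▸ hS2D2)
    have e1 := congrFun heq S1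
    have e2 := congrFun heq S2
    simp only [Pi.add_apply, Pi.smul_apply, smul_eq_mul] at e1 e2
    rw [gameOf_eq_one (Or.inl hS1D1), gameOf_eq_zero hS1D2 hS1U,
      gameOf_eq_one (Or.inl (Finset.mem_union_left _ hS1D1))] at e1
    rw [gameOf_eq_zero hS2D1 hS2U, gameOf_eq_one (Or.inl hS2D2),
      gameOf_eq_one (Or.inl (Finset.mem_union_right _ hS2D2))] at e2
    linarith

lemma not_extreme_sub {n : ℕ} (D1 D2 : Finset (Finset (Fin n))) (i : Fin n)
    (h2U : Finset.univ ∉ D2)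
    (hi1 : ∀ S ∈ D1, i ∈ S) (hi2 : ∀ S ∈ D2, i ∈ S)
    (hsub : D1 ⊆ D2) (T1 T2 : Finset (Fin n))
    (hT1 : T1 ∈ D2 \ D1) (hT2 : T2 ∈ D2 \ D1) (hTT : T1 ≠ T2) :
    ¬ IsExtreme ℝ (BGplus n) (segment ℝ (gameOf D1) (gameOf D2)) := by
  obtain ⟨hT1D2, hT1D1⟩ := Finset.mem_sdiff.mp hT1
  obtain ⟨hT2D2, hT2D1⟩ := Finset.mem_sdiff.mp hT2
  have hT1U : T1 ≠ Finset.univ := fun h => h2U (h ▸ hT1D2)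
  have hT2U : T2 ≠ Finset.univ := fun h => h2U (h ▸ hT2D2)
  apply not_extreme_of (gameOf D1) (gameOf D2) (gameOf (insert T1 D1)) (gameOf (D2.erase T1))
  · exact gameOf_mem_BGplus _ i (fun S hS => by
      rcases Finset.mem_insert.mp hS with h | h
      exacts [h ▸ hi2 T1 hT1D2, hi1 S h])
  · exact gameOf_mem_BGplus _ i (fun S hS => hi2 S (Finset.mem_of_mem_erase hS))
  · intro S
    by_cases hu : S = Finset.univ
    · simp [gameOf, hu]
    · by_cases hsT : S = T1
      · subst hsT
        simp [gameOf, hT1D1, hT1D2, hu, Finset.mem_insert, Finset.mem_erase]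
      · by_cases h1 : S ∈ D1
        · have h2 : S ∈ D2 := hsub h1
          simp [gameOf, h1, h2, hu, Finset.mem_insert, Finset.mem_erase, hsT]
        · by_cases h2 : S ∈ D2 <;>
            simp [gameOf, h1, h2, hu, Finset.mem_insert, Finset.mem_erase, hsT]
  · rintro ⟨a, b, ha, hb, hab, heq⟩
    have e1 := congrFun heq T1
    have e2 := congrFun heq T2
    simp only [Pi.add_apply, Pi.smul_apply, smul_eq_mul] at e1 e2
    rw [gameOf_eq_zero hT1D1 hT1U, gameOf_eq_one (Or.inl hT1D2),
      gameOf_eq_one (Or.inl (Finset.mem_insert_self T1 D1))] at e1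
    have hT21 : T2 ≠ T1 := fun h => hTT h.symm
    have hT2ins : T2 ∉ insert T1 D1 := by
      simp [Finset.mem_insert, hT2D1, hT21]
    rw [gameOf_eq_zero hT2D1 hT2U, gameOf_eq_one (Or.inl hT2D2),
      gameOf_eq_zero hT2ins hT2U] at e2
    linarith

/-- Two distinct vertices `v_{D1}`, `v_{D2}` with `⋂D1 = {i} = ⋂D2` are adjacent
(i.e. the segment joining them is a face of `BG_+(n)`) iff `D1 ⊆ D2` or `D2 ⊆ D1`
and `|D1 Δ D2| = 1`. -/
theorem adjacent_iff_same_singleton_intersection {n : ℕ}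
    (D1 D2 : Finset (Finset (Fin n)))
    (h1emp : ∅ ∉ D1) (h1U : Finset.univ ∉ D1)
    (h2emp : ∅ ∉ D2) (h2U : Finset.univ ∉ D2)
    (i : Fin n)
    (hi1 : Finset.univ.filter (fun j : Fin n => ∀ S ∈ D1, j ∈ S) = {i})
    (hi2 : Finset.univ.filter (fun j : Fin n => ∀ S ∈ D2, j ∈ S) = {i})
    (hne : gameOf D1 ≠ gameOf D2) :
    IsExtreme ℝ (BGplus n) (segment ℝ (gameOf D1) (gameOf D2)) ↔
      ((D1 ⊆ D2 ∨ D2 ⊆ D1) ∧ ((D1 \ D2) ∪ (D2 \ D1)).card = 1) := by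
  have hiD1 : ∀ S ∈ D1, i ∈ S :=
    (Finset.mem_filter.mp (show i ∈ _ by rw [hi1]; exact Finset.mem_singleton_self i)).2
  have hiD2 : ∀ S ∈ D2, i ∈ S :=
    (Finset.mem_filter.mp (show i ∈ _ by rw [hi2]; exact Finset.mem_singleton_self i)).2
  have hD1ne : D1 ≠ D2 := by rintro rfl; exact hne rfl
  constructor
  · intro hext
    have hA : D1 ⊆ D2 ∨ D2 ⊆ D1 := by
      by_contra hC
      push_neg at hC
      obtain ⟨hC1, hC2⟩ := hC
      obtain ⟨S1, hS1D1, hS1D2⟩ := Finset.not_subset.mp hC1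
      obtain ⟨S2, hS2D2, hS2D1⟩ := Finset.not_subset.mp hC2
      exact not_extreme_nonsub D1 D2 i h1U h2U hiD1 hiD2 S1 hS1D1 hS1D2 S2 hS2D2 hS2D1 hext
    refine ⟨hA, ?_⟩
    by_contra hcard
    have hΔne : ((D1 \ D2) ∪ (D2 \ D1)).Nonempty := by
      rw [Finset.nonempty_iff_ne_empty]
      intro h
      rw [Finset.union_eq_empty] at h
      exact hD1ne (Finset.Subset.antisymm
        (Finset.sdiff_eq_empty_iff_subset.mp h.1) (Finset.sdiff_eq_empty_iff_subset.mp h.2))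
    have h2le : 2 ≤ ((D1 \ D2) ∪ (D2 \ D1)).card := by
      have := Finset.card_pos.mpr hΔne
      omega
    rcases hA with hsub | hsub
    · have he : D1 \ D2 = ∅ := Finset.sdiff_eq_empty_iff_subset.mpr hsub
      rw [he, Finset.empty_union] at h2le
      obtain ⟨T1, hT1, T2, hT2, hTT⟩ := Finset.one_lt_card.mp h2le
      exact not_extreme_sub D1 D2 i h2U hiD1 hiD2 hsub T1 T2 hT1 hT2 hTT hext
    · have he : D2 \ D1 = ∅ := Finset.sdiff_eq_empty_iff_subset.mpr hsub
      rw [he, Finset.union_empty] at h2le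
      obtain ⟨T1, hT1, T2, hT2, hTT⟩ := Finset.one_lt_card.mp h2le
      rw [segment_symm] at hext
      exact not_extreme_sub D2 D1 i h1U hiD2 hiD1 hsub T1 T2 hT1 hT2 hTT hext
  · rintro ⟨hA, hcard⟩
    rcases hA with hsub | hsub
    · have he : D1 \ D2 = ∅ := Finset.sdiff_eq_empty_iff_subset.mpr hsub
      rw [he, Finset.empty_union] at hcard
      obtain ⟨T, hT⟩ := Finset.card_eq_one.mp hcard
      have hTm : T ∈ D2 \ D1 := hT ▸ Finset.mem_singleton_self T
      obtain ⟨hTD2, hTD1⟩ := Finset.mem_sdiff.mp hTm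
      have hD2 : D2 = insert T D1 := by
        rw [← Finset.union_sdiff_of_subset hsub, hT, Finset.union_comm, ← Finset.insert_eq]
      rw [hD2]
      exact extreme_insert D1 T i hTD1 (fun h => h2U (h ▸ hTD2)) hiD1 (hiD2 T hTD2)
    · have he : D2 \ D1 = ∅ := Finset.sdiff_eq_empty_iff_subset.mpr hsub
      rw [he, Finset.union_empty] at hcard
      obtain ⟨T, hT⟩ := Finset.card_eq_one.mp hcard
      have hTm : T ∈ D1 \ D2 := hT ▸ Finset.mem_singleton_self T
      obtain ⟨hTD1, hTD2⟩ := Finset.mem_sdiff.mp hTm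
      have hD1 : D1 = insert T D2 := by
        rw [← Finset.union_sdiff_of_subset hsub, hT, Finset.union_comm, ← Finset.insert_eq]
      rw [hD1, segment_symm]
      exact extreme_insert D2 T i hTD2 (fun h => h1U (h ▸ hTD1)) hiD2 (hiD1 T hTD1)
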